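/- Let (X_t : t ∈ T) be a family of topological spaces, X = ∏_{t∈T} X_t, a = (a_t)_{t∈T} ∈ X, let (Y,d) be a metric space, and let f : (σ(a),τ) → Y be a strongly separately continuous mapping, where σ(a) carries the subspace Tychonoff topology. Then the set D(f) of points of σ(a) at which f is discontinuous is nearly open in (σ(a),τ). -/

import Mathlib

open Function Filter Topology

/-- `Sigma1 x` (σ₁(x)): the set of points differing from `x` in at most one coordinate. -/
def Sigma1 {T : Type*} {X : T → Type*} (x : ∀ t, X t) : Set (∀ t, X t) :=
  {y | {t | y t ≠ x t}.Subsingleton}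

/-- `SigmaProd x` (σ(x)): the set of points differing from `x` in at most finitely many
coordinates. -/
def SigmaProd {T : Type*} {X : T → Type*} (x : ∀ t, X t) : Set (∀ t, X t) :=
  {y | {t | y t ≠ x t}.Finite}

/-- A set `A` is `S`-open if `σ₁(x) ⊆ A` for every `x ∈ A`. -/
def SOpen {T : Type*} {X : T → Type*} (A : Set (∀ t, X t)) : Prop :=
  ∀ x ∈ A, Sigma1 x ⊆ A

theorem update_mem {T : Type*} [DecidableEq T] {X : T → Type*} {A : Set (∀ t, X t)}
    (hA : SOpen A) {x : ∀ t, X t} (hx : x ∈ A) (t : T) (v : X t) :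
    Function.update x t v ∈ A := by
  apply hA x hx
  intro s hs s' hs'
  simp only [Set.mem_setOf_eq] at hs hs'
  have h1 : s = t := by
    by_contra h
    exact hs (Function.update_of_ne h v x)
  have h2 : s' = t := by
    by_contra h
    exact hs' (Function.update_of_ne h v x)
  rw [h1, h2]

/-- The point `x_t^v`: `x` with its `t`-th coordinate replaced by `v`, as an element
of the `S`-open set `A`. -/
def updPt {T : Type*} [DecidableEq T] {X : T → Type*} {A : Set (∀ t, X t)}
    (hA : SOpen A) (x : ↥A) (t : T) (v : X t) : ↥A :=
  ⟨Function.update x.1 t v, update_mem hA x.2 t v⟩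

/-- `f : (A, T') → Y` is strongly separately continuous at `a` (w.r.t. every variable):
for each `t`, `lim_{x → a} dist (f x) (f (x_t^a)) = 0`, the limit taken in `T'`. -/
def StrSepContAt {T : Type*} [DecidableEq T] {X : T → Type*} {A : Set (∀ t, X t)}
    (hA : SOpen A) (T' : TopologicalSpace ↥A) {Y : Type*} [MetricSpace Y]
    (f : ↥A → Y) (a : ↥A) : Prop :=
  ∀ t : T, Filter.Tendsto (fun x : ↥A => dist (f x) (f (updPt hA x t (a.1 t))))
    (@nhds _ T' a) (nhds 0)

theorem sOpen_sigmaProd {T : Type*} {X : T → Type*} (a : ∀ t, X t) :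
    SOpen (SigmaProd a) := by
  intro x hx y hy
  have hsub : {t | y t ≠ a t} ⊆ {t | y t ≠ x t} ∪ {t | x t ≠ a t} := by
    intro t ht
    rw [Set.mem_union]
    by_contra h
    push_neg at h
    simp only [Set.mem_setOf_eq, not_not] at h
    exact ht (h.1.trans h.2)
  exact Set.Finite.subset (Set.Finite.union hy.finite hx) hsub

/-- The point `a_{T0}^z`: coordinates in `T0` taken from `z`, the rest from `a`. -/
def glue {T : Type*} [DecidableEq T] {X : T → Type*} (a : ∀ t, X t) (T0 : Finset T)
    (z : ∀ t : T0, X t.1) : ∀ t, X t :=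
  fun s => if h : s ∈ T0 then z ⟨s, h⟩ else a s

theorem glue_mem {T : Type*} [DecidableEq T] {X : T → Type*} (a : ∀ t, X t)
    (T0 : Finset T) (z : ∀ t : T0, X t.1) : glue a T0 z ∈ SigmaProd a := by
  apply Set.Finite.subset T0.finite_toSet
  intro s hs
  simp only [SigmaProd, Set.mem_setOf_eq, glue] at hs
  by_contra h
  rw [dif_neg (by simpa using h)] at hs
  exact hs rfl

/-- `W ⊆ σ(a)` is nearly open: for every finite `T0 ⊆ T`, the set
`{z ∈ ∏_{t ∈ T0} X t : a_{T0}^z ∈ W}` is open in the finite product. -/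
def NearlyOpen {T : Type*} [DecidableEq T] {X : T → Type*} [∀ t, TopologicalSpace (X t)]
    (a : ∀ t, X t) (W : Set ↥(SigmaProd a)) : Prop :=
  ∀ T0 : Finset T, IsOpen {z : ∀ t : T0, X t.1 |
    (⟨glue a T0 z, glue_mem a T0 z⟩ : ↥(SigmaProd a)) ∈ W}


section Aux

variable {T : Type*} [DecidableEq T] {X : T → Type*}

/-- `x` with the coordinates in `T0` replaced by those of `b`. -/
def reps (T0 : Finset T) (b x : ∀ t, X t) : ∀ t, X t :=
  fun s => if s ∈ T0 then b s else x s

theorem reps_mem {a : ∀ t, X t} (T0 : Finset T) (b : ∀ t, X t) {x : ∀ t, X t}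
    (hx : x ∈ SigmaProd a) : reps T0 b x ∈ SigmaProd a := by
  apply Set.Finite.subset (T0.finite_toSet.union hx)
  intro s hs
  simp only [SigmaProd, Set.mem_setOf_eq, reps] at hs
  by_cases h : s ∈ T0
  · exact Or.inl h
  · rw [if_neg h] at hs
    exact Or.inr hs

/-- Subtype version of `reps`. -/
def repsPt {a : ∀ t, X t} (T0 : Finset T) (b : ∀ t, X t) (x : ↥(SigmaProd a)) :
    ↥(SigmaProd a) :=
  ⟨reps T0 b x.1, reps_mem T0 b x.2⟩

theorem reps_empty (b x : ∀ t, X t) : reps (∅ : Finset T) b x = x := by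
  funext s; simp [reps]

theorem reps_insert {t : T} {S : Finset T} (ht : t ∉ S) (b x : ∀ t, X t) :
    reps (insert t S) b x = reps S b (Function.update x t (b t)) := by
  funext s
  by_cases hs : s ∈ S
  · simp [reps, hs]
  · by_cases hst : s = t
    · subst hst
      simp [reps, hs]
    · simp [reps, hs, hst, Function.update_of_ne hst]

theorem reps_reps (T0 : Finset T) (b c x : ∀ t, X t) :
    reps T0 b (reps T0 c x) = reps T0 b x := by
  funext s; by_cases h : s ∈ T0 <;> simp [reps, h]

theorem reps_glue_glue (a : ∀ t, X t) (T0 : Finset T) (z0 z : ∀ t : T0, X t.1) :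
    reps T0 (glue a T0 z0) (glue a T0 z) = glue a T0 z0 := by
  funext s; by_cases h : s ∈ T0 <;> simp [reps, glue, h]

variable [∀ t, TopologicalSpace (X t)]

theorem continuous_repsPt {a : ∀ t, X t} (T0 : Finset T) (b : ∀ t, X t) :
    Continuous (fun x : ↥(SigmaProd a) => repsPt T0 b x) := by
  unfold repsPt
  refine Continuous.subtype_mk (continuous_pi fun s => ?_) _
  unfold reps
  by_cases h : s ∈ T0
  · simpa [h] using (continuous_const : Continuous fun _ : ↥(SigmaProd a) => b s)
  · simpa [h, Function.comp_def] using (continuous_apply s).comp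
      (continuous_subtype_val : Continuous fun x : ↥(SigmaProd a) => x.1)

theorem continuous_gluePt (a : ∀ t, X t) (T0 : Finset T) :
    Continuous (fun z : ∀ t : T0, X t.1 =>
      (⟨glue a T0 z, glue_mem a T0 z⟩ : ↥(SigmaProd a))) := by
  refine Continuous.subtype_mk (continuous_pi fun s => ?_) _
  unfold glue
  by_cases h : s ∈ T0
  · simpa [h] using (continuous_apply (⟨s, h⟩ : T0) :
      Continuous fun z : ∀ t : T0, X t.1 => z ⟨s, h⟩)
  · simpa [h] using (continuous_const : Continuous fun _ : ∀ t : T0, X t.1 => a s)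

theorem continuous_updPtMap {a : ∀ t, X t} (t : T) (v : X t) :
    Continuous (fun x : ↥(SigmaProd a) => updPt (sOpen_sigmaProd a) x t v) := by
  unfold updPt
  refine Continuous.subtype_mk (continuous_pi fun s => ?_) _
  by_cases h : s = t
  · subst h
    simpa using (continuous_const : Continuous fun _ : ↥(SigmaProd a) => v)
  · simpa [Function.update_of_ne h, Function.comp_def] using (continuous_apply s).comp
      (continuous_subtype_val : Continuous fun x : ↥(SigmaProd a) => x.1)

theorem tendsto_dist_repsPt {a : ∀ t, X t} {Y : Type*} [MetricSpace Y]
    {f : ↥(SigmaProd a) → Y}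
    (hf : ∀ u : ↥(SigmaProd a), StrSepContAt (sOpen_sigmaProd a) inferInstance f u)
    (u : ↥(SigmaProd a)) (T0 : Finset T) :
    Filter.Tendsto (fun x : ↥(SigmaProd a) => dist (f x) (f (repsPt T0 u.1 x)))
      (nhds u) (nhds 0) := by
  induction T0 using Finset.induction_on with
  | empty =>
      have he : ∀ x : ↥(SigmaProd a), repsPt (∅ : Finset T) u.1 x = x := fun x =>
        Subtype.ext (reps_empty u.1 x.1)
      have heq : (fun x : ↥(SigmaProd a) => dist (f x) (f (repsPt (∅ : Finset T) u.1 x)))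
          = fun _ => (0 : ℝ) := by
        funext x
        rw [he x, dist_self]
      rw [heq]
      exact tendsto_const_nhds
  | @insert t S ht ih =>
      have hcont := continuous_updPtMap (a := a) t (u.1 t)
      have hufix : updPt (sOpen_sigmaProd a) u t (u.1 t) = u :=
        Subtype.ext (by simp [updPt])
      have htend : Filter.Tendsto (fun x : ↥(SigmaProd a) =>
          updPt (sOpen_sigmaProd a) x t (u.1 t)) (nhds u) (nhds u) := by
        have h := hcont.tendsto u
        rwa [hufix] at h
      have h2 := ih.comp htend
      have hsum : Filter.Tendsto (fun x : ↥(SigmaProd a) =>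
          dist (f x) (f (updPt (sOpen_sigmaProd a) x t (u.1 t))) +
          dist (f (updPt (sOpen_sigmaProd a) x t (u.1 t)))
            (f (repsPt S u.1 (updPt (sOpen_sigmaProd a) x t (u.1 t)))))
          (nhds u) (nhds 0) := by
        have h3 := (hf u t).add h2
        simp only [Function.comp_def] at h3
        rwa [add_zero] at h3
      refine squeeze_zero (fun x => dist_nonneg) (fun x => ?_) hsum
      rw [show repsPt (insert t S) u.1 x =
          repsPt S u.1 (updPt (sOpen_sigmaProd a) x t (u.1 t)) from
        Subtype.ext (reps_insert ht u.1 x.1)]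
      exact dist_triangle _ _ _

end Aux

/-- The discontinuity point set of a strongly separately continuous mapping on
`(σ(a), τ)` is nearly open. -/
theorem discontinuitySet_nearlyOpen {T : Type*} [DecidableEq T] {X : T → Type*}
    [∀ t, TopologicalSpace (X t)] (a : ∀ t, X t) {Y : Type*} [MetricSpace Y]
    (f : ↥(SigmaProd a) → Y)
    (hf : ∀ u : ↥(SigmaProd a), StrSepContAt (sOpen_sigmaProd a) inferInstance f u) :
    NearlyOpen a {u : ↥(SigmaProd a) | ¬ ContinuousAt f u} := by
  intro T0
  rw [isOpen_iff_mem_nhds]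
  intro z0 hz0
  simp only [Set.mem_setOf_eq] at hz0
  set u : ↥(SigmaProd a) := ⟨glue a T0 z0, glue_mem a T0 z0⟩ with hu
  rw [ContinuousAt, Metric.tendsto_nhds] at hz0
  push_neg at hz0
  obtain ⟨ε, hε, hfreq⟩ := hz0
  have hA := tendsto_dist_repsPt hf u T0
  have hE : ∀ᶠ x in nhds u, dist (f x) (f (repsPt T0 u.1 x)) < ε / 4 :=
    hA.eventually (gt_mem_nhds (by positivity))
  rw [Filter.eventually_iff] at hE
  obtain ⟨O, hOE, hOopen, huO⟩ := mem_nhds_iff.mp hE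
  have hΓ := continuous_gluePt a T0
  refine Filter.mem_of_superset ((hOopen.preimage hΓ).mem_nhds ?_) ?_
  · show (⟨glue a T0 z0, glue_mem a T0 z0⟩ : ↥(SigmaProd a)) ∈ O
    rw [← hu]; exact huO
  · intro z hz
    simp only [Set.mem_preimage] at hz
    simp only [Set.mem_setOf_eq]
    intro hv
    set v : ↥(SigmaProd a) := ⟨glue a T0 z, glue_mem a T0 z⟩ with hvdef
    have hvO : v ∈ O := hz
    have hψu : repsPt T0 v.1 u = v := Subtype.ext (reps_glue_glue a T0 z z0)
    have hrv : repsPt T0 u.1 v = u := Subtype.ext (reps_glue_glue a T0 z0 z)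
    have tendstoψ : Filter.Tendsto (fun x : ↥(SigmaProd a) => repsPt T0 v.1 x)
        (nhds u) (nhds v) := by
      have h := (continuous_repsPt T0 v.1).tendsto u
      rwa [hψu] at h
    have hEnhdsv : {x : ↥(SigmaProd a) | dist (f x) (f (repsPt T0 u.1 x)) < ε / 4}
        ∈ nhds v := Filter.mem_of_superset (hOopen.mem_nhds hvO) hOE
    have hEψ : ∀ᶠ x in nhds u,
        dist (f (repsPt T0 v.1 x)) (f (repsPt T0 u.1 (repsPt T0 v.1 x))) < ε / 4 :=
      tendstoψ.eventually hEnhdsv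
    have hclose : ∀ᶠ x in nhds u, dist (f (repsPt T0 v.1 x)) (f v) < ε / 4 :=
      tendstoψ.eventually (Metric.tendsto_nhds.mp hv (ε / 4) (by positivity))
    have hvE : dist (f v) (f u) < ε / 4 := by
      have h := hOE hvO
      simp only [Set.mem_setOf_eq] at h
      rwa [hrv] at h
    have hEu : ∀ᶠ x in nhds u, dist (f x) (f (repsPt T0 u.1 x)) < ε / 4 := hE
    have hev : ∀ᶠ x in nhds u, dist (f x) (f u) < ε := by
      filter_upwards [hEu, hEψ, hclose] with x h1 h2 h3
      rw [show repsPt T0 u.1 (repsPt T0 v.1 x) = repsPt T0 u.1 x from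
        Subtype.ext (reps_reps T0 u.1 v.1 x.1)] at h2
      have t1 : dist (f x) (f v) ≤ dist (f x) (f (repsPt T0 u.1 x)) +
          dist (f (repsPt T0 u.1 x)) (f (repsPt T0 v.1 x)) +
          dist (f (repsPt T0 v.1 x)) (f v) := dist_triangle4 _ _ _ _
      have t2 : dist (f x) (f u) ≤ dist (f x) (f v) + dist (f v) (f u) :=
        dist_triangle _ _ _
      rw [dist_comm (f (repsPt T0 u.1 x)) (f (repsPt T0 v.1 x))] at t1
      linarith
    exact hfreq (hev.mono fun x hx => not_le.mpr hx)
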